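/- arXiv:1108.1524 — 2 statements merged into one kernel-verified Lean document; each statement's English description precedes it below -/
import Mathlib

section
/- Let J̃₀ be the Bessel function of the first kind of order zero. Then for all real x, |J̃₀(x)| ≤ min{1, √(3/(4|x|))} (with the convention that the second bound is only required for x ≠ 0). -/
open Real

/-- The Bessel function of the first kind of order zero, defined by its power series. -/
noncomputable def besselJ0 (x : ℝ) : ℝ :=
  ∑' j : ℕ, (-1) ^ j * x ^ (2 * j) / (2 ^ (2 * j) * (Nat.factorial j) ^ 2)

open Finset


noncomputable def bT (j : ℕ) (x : ℝ) : ℝ :=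
  (-1) ^ j * x ^ (2 * j) / (2 ^ (2 * j) * (Nat.factorial j) ^ 2)

lemma bD_pos (j : ℕ) : (0:ℝ) < 2 ^ (2 * j) * (Nat.factorial j) ^ 2 := by
  positivity

lemma abs_bT_le (j : ℕ) (x : ℝ) : |bT j x| ≤ (x ^ 2) ^ j / Nat.factorial j := by
  have h1 : |bT j x| = |x| ^ (2 * j) / (2 ^ (2 * j) * (Nat.factorial j) ^ 2) := by
    rw [bT, abs_div, abs_mul, abs_pow, abs_neg, abs_one, one_pow, one_mul, abs_pow,
      abs_of_pos (bD_pos j)]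
  rw [h1]
  have h2 : |x| ^ (2 * j) = (x ^ 2) ^ j := by
    rw [pow_mul, sq_abs]
  rw [h2]
  apply div_le_div_of_nonneg_left (by positivity) (by positivity)
  calc (Nat.factorial j : ℝ) ≤ (Nat.factorial j : ℝ) ^ 2 := by
        nlinarith [Nat.one_le_cast (α := ℝ) |>.2 (Nat.one_le_iff_ne_zero.2 (Nat.factorial_ne_zero j)), sq_nonneg ((Nat.factorial j : ℝ) - 1)]
    _ ≤ 2 ^ (2 * j) * (Nat.factorial j : ℝ) ^ 2 := by
        nlinarith [sq_nonneg ((Nat.factorial j : ℝ)), one_le_pow₀ (by norm_num : (1:ℝ) ≤ 2) (n := 2*j)]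

lemma summable_bT (x : ℝ) : Summable (fun j => bT j x) := by
  apply Summable.of_norm
  apply Summable.of_nonneg_of_le (fun j => norm_nonneg _) (fun j => abs_bT_le j x)
  exact Real.summable_pow_div_factorial (x ^ 2)

lemma besselJ0_eq (x : ℝ) :
    (∑' j : ℕ, (-1) ^ j * x ^ (2 * j) / (2 ^ (2 * j) * (Nat.factorial j) ^ 2)) = ∑' j, bT j x := rfl


noncomputable def bT1 (j : ℕ) (x : ℝ) : ℝ :=
  (-1) ^ j * (2 * j) * x ^ (2 * j - 1) / (2 ^ (2 * j) * (Nat.factorial j) ^ 2)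

noncomputable def bT2 (j : ℕ) (x : ℝ) : ℝ :=
  (-1) ^ j * (2 * j) * ((2 * j - 1 : ℕ) : ℝ) * x ^ (2 * j - 2) / (2 ^ (2 * j) * (Nat.factorial j) ^ 2)

lemma fact_one_le (j : ℕ) : (1:ℝ) ≤ (Nat.factorial j : ℝ) :=
  Nat.one_le_cast.2 (Nat.one_le_iff_ne_zero.2 (Nat.factorial_ne_zero j))

lemma two_j_le (j : ℕ) : ((2*j : ℕ):ℝ) ≤ 2 ^ (2*j) := by
  exact_mod_cast (Nat.lt_two_pow_self (n := 2*j)).le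

lemma coeff2_le (j : ℕ) : ((2*j : ℕ):ℝ) * ((2*j-1 : ℕ):ℝ) ≤ 4 * 2 ^ (2*j) := by
  have h : (j:ℝ) ≤ 2 ^ j := by exact_mod_cast (Nat.lt_two_pow_self (n := j)).le
  have h0 : (0:ℝ) ≤ (j:ℝ) := by positivity
  have h1 : ((2*j-1 : ℕ):ℝ) ≤ 2*j := by exact_mod_cast Nat.sub_le (2*j) 1
  have h2 : ((2:ℝ))^(2*j) = (2^j)^2 := by rw [pow_mul']
  push_cast at h1 ⊢
  nlinarith [sq_nonneg ((2:ℝ)^j - j)]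

lemma bound1 (j : ℕ) (R y : ℝ) (hR : 1 ≤ R) (hy : |y| ≤ R) :
    |bT1 j y| ≤ 4 * (R^2)^j / Nat.factorial j := by
  have hD : (0:ℝ) < 2 ^ (2 * j) * (Nat.factorial j) ^ 2 := by positivity
  have h1 : |bT1 j y| = ((2*j:ℕ):ℝ) * |y| ^ (2*j-1) / (2 ^ (2 * j) * (Nat.factorial j) ^ 2) := by
    rw [bT1, abs_div, abs_mul, abs_mul, abs_pow, abs_neg, abs_one, one_pow, one_mul, abs_pow,
      abs_of_pos hD]
    push_cast
    simp [abs_of_nonneg, Nat.cast_nonneg]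
  rw [h1, div_le_div_iff₀ hD (by positivity)]
  have hy' : |y| ^ (2*j-1) ≤ R ^ (2*j) := by
    calc |y| ^ (2*j-1) ≤ R ^ (2*j-1) := pow_le_pow_left₀ (abs_nonneg y) hy _
    _ ≤ R ^ (2*j) := pow_le_pow_right₀ hR (Nat.sub_le _ _)
  have hR2 : R ^ (2*j) = (R^2)^j := by rw [pow_mul]
  have h2j := two_j_le j
  have hf := fact_one_le j
  have hyn : (0:ℝ) ≤ |y| ^ (2*j-1) := by positivity
  have hRn : (0:ℝ) ≤ R ^ (2*j) := by positivity
  have h2p : (0:ℝ) < 2 ^ (2*j) := by positivity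
  have hjn : (0:ℝ) ≤ ((2*j:ℕ):ℝ) := by positivity
  calc ((2*j:ℕ):ℝ) * |y| ^ (2*j-1) * (Nat.factorial j)
      ≤ 2^(2*j) * R ^ (2*j) * (Nat.factorial j)^2 := by
        exact mul_le_mul (mul_le_mul h2j hy' hyn (by positivity)) (by nlinarith [hf]) (by positivity) (by positivity)
    _ ≤ 4 * (R^2)^j * (2 ^ (2 * j) * (Nat.factorial j) ^ 2) := by rw [hR2]; nlinarith [sq_nonneg ((Nat.factorial j:ℝ)), pow_nonneg (by norm_num : (0:ℝ) ≤ 2) (2*j), pow_nonneg (sq_nonneg R) j, hf]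

lemma bound2 (j : ℕ) (R y : ℝ) (hR : 1 ≤ R) (hy : |y| ≤ R) :
    |bT2 j y| ≤ 16 * (R^2)^j / Nat.factorial j := by
  have hD : (0:ℝ) < 2 ^ (2 * j) * (Nat.factorial j) ^ 2 := by positivity
  have h1 : |bT2 j y| = ((2*j:ℕ):ℝ) * ((2*j-1:ℕ):ℝ) * |y| ^ (2*j-2) / (2 ^ (2 * j) * (Nat.factorial j) ^ 2) := by
    rw [bT2, abs_div, abs_mul, abs_mul, abs_mul, abs_pow, abs_neg, abs_one, one_pow, one_mul,
      abs_of_pos hD]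
    push_cast
    simp [abs_of_nonneg, Nat.cast_nonneg]
  rw [h1, div_le_div_iff₀ hD (by positivity)]
  have hy' : |y| ^ (2*j-2) ≤ R ^ (2*j) := by
    calc |y| ^ (2*j-2) ≤ R ^ (2*j-2) := pow_le_pow_left₀ (abs_nonneg y) hy _
    _ ≤ R ^ (2*j) := pow_le_pow_right₀ hR (Nat.sub_le _ _)
  have hR2 : R ^ (2*j) = (R^2)^j := by rw [pow_mul]
  have hc := coeff2_le j
  have hf := fact_one_le j
  have hyn : (0:ℝ) ≤ |y| ^ (2*j-2) := by positivity
  have hRn : (0:ℝ) ≤ R ^ (2*j) := by positivity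
  have hcn : (0:ℝ) ≤ ((2*j:ℕ):ℝ) * ((2*j-1:ℕ):ℝ) := by positivity
  calc ((2*j:ℕ):ℝ) * ((2*j-1:ℕ):ℝ) * |y| ^ (2*j-2) * (Nat.factorial j)
      ≤ (4 * 2^(2*j)) * R ^ (2*j) * (Nat.factorial j)^2 := by
        exact mul_le_mul (mul_le_mul hc hy' hyn (by positivity)) (by nlinarith [hf]) (by positivity) (by positivity)
    _ ≤ 16 * (R^2)^j * (2 ^ (2 * j) * (Nat.factorial j) ^ 2) := by rw [hR2]; nlinarith [pow_nonneg (by norm_num : (0:ℝ) ≤ 2) (2*j), pow_nonneg (sq_nonneg R) j, hf]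




lemma hasDerivAt_bT (j : ℕ) (y : ℝ) : HasDerivAt (bT j) (bT1 j y) y := by
  have h := ((hasDerivAt_pow (2*j) y).const_mul ((-1:ℝ)^j)).div_const
      ((2:ℝ) ^ (2 * j) * (Nat.factorial j) ^ 2)
  convert h using 1
  all_goals try rfl
  rw [bT1]; push_cast; ring

lemma hasDerivAt_bT1 (j : ℕ) (y : ℝ) : HasDerivAt (bT1 j) (bT2 j y) y := by
  have h := ((hasDerivAt_pow (2*j-1) y).const_mul ((-1:ℝ)^j * (2*j))).div_const
      ((2:ℝ) ^ (2 * j) * (Nat.factorial j) ^ 2)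
  have he : 2*j-1-1 = 2*j-2 := by omega
  rw [he] at h
  convert h using 1
  all_goals try rfl
  rw [bT2]; push_cast; ring



noncomputable def bJ (x : ℝ) : ℝ := ∑' j, bT j x
noncomputable def bB1 (x : ℝ) : ℝ := ∑' j, bT1 j x
noncomputable def bB2 (x : ℝ) : ℝ := ∑' j, bT2 j x

lemma summable_bT1 (x : ℝ) : Summable (fun j => bT1 j x) := by
  apply Summable.of_norm
  refine Summable.of_nonneg_of_le (fun j => norm_nonneg _)
      (fun j => ?_) ((Real.summable_pow_div_factorial ((|x|+1)^2)).mul_left 4)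
  exact le_trans (bound1 j (|x|+1) x (by linarith [abs_nonneg x]) (by linarith [abs_nonneg x])) (le_of_eq (mul_div_assoc _ _ _))

lemma summable_bT2 (x : ℝ) : Summable (fun j => bT2 j x) := by
  apply Summable.of_norm
  refine Summable.of_nonneg_of_le (fun j => norm_nonneg _)
      (fun j => ?_) ((Real.summable_pow_div_factorial ((|x|+1)^2)).mul_left 16)
  exact le_trans (bound2 j (|x|+1) x (by linarith [abs_nonneg x]) (by linarith [abs_nonneg x])) (le_of_eq (mul_div_assoc _ _ _))

lemma hasDerivAt_bJ (x : ℝ) : HasDerivAt bJ (bB1 x) x := by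
  set R := |x| + 1 with hRdef
  have hR : 1 ≤ R := by rw [hRdef]; linarith [abs_nonneg x]
  have hR0 : 0 < R := by linarith
  have h : HasDerivAt (fun z => ∑' j, bT j z) (∑' j, bT1 j x) x := by
    apply hasDerivAt_tsum_of_isPreconnected
      ((Real.summable_pow_div_factorial (R^2)).mul_left 4)
      Metric.isOpen_ball (convex_ball (0:ℝ) R).isPreconnected
      (fun j y _ => hasDerivAt_bT j y)
      (fun j y hy => le_trans (bound1 j R y hR (by simpa [Real.dist_eq] using (Metric.mem_ball.1 hy).le)) (le_of_eq (mul_div_assoc _ _ _)))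
      (Metric.mem_ball_self hR0) (summable_bT 0)
      (by rw [Metric.mem_ball, Real.dist_eq, sub_zero, hRdef]; linarith)
  exact h

lemma hasDerivAt_bB1 (x : ℝ) : HasDerivAt bB1 (bB2 x) x := by
  set R := |x| + 1 with hRdef
  have hR : 1 ≤ R := by rw [hRdef]; linarith [abs_nonneg x]
  have hR0 : 0 < R := by linarith
  have h : HasDerivAt (fun z => ∑' j, bT1 j z) (∑' j, bT2 j x) x := by
    apply hasDerivAt_tsum_of_isPreconnected
      ((Real.summable_pow_div_factorial (R^2)).mul_left 16)
      Metric.isOpen_ball (convex_ball (0:ℝ) R).isPreconnected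
      (fun j y _ => hasDerivAt_bT1 j y)
      (fun j y hy => le_trans (bound2 j R y hR (by simpa [Real.dist_eq] using (Metric.mem_ball.1 hy).le)) (le_of_eq (mul_div_assoc _ _ _)))
      (Metric.mem_ball_self hR0) (summable_bT1 0)
      (by rw [Metric.mem_ball, Real.dist_eq, sub_zero, hRdef]; linarith)
  exact h

noncomputable def bC (j : ℕ) (x : ℝ) : ℝ :=
  (-1) ^ j * (2 * j) ^ 2 * x ^ (2 * j - 1) / (2 ^ (2 * j) * (Nat.factorial j) ^ 2)

lemma bC_eq (j : ℕ) (x : ℝ) : x * bT2 j x + bT1 j x = bC j x := by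
  cases j with
  | zero => simp [bT2, bT1, bC]
  | succ k =>
    have h2 : 2 * (k+1) - 2 = 2 * k := by omega
    have h1 : 2 * (k+1) - 1 = 2 * k + 1 := by omega
    rw [bT2, bT1, bC, h2, h1]
    push_cast
    ring

lemma bC_succ (k : ℕ) (x : ℝ) : bC (k+1) x = -(x * bT k x) := by
  rw [bC, bT]
  have h1 : 2 * (k+1) - 1 = 2 * k + 1 := by omega
  rw [h1, Nat.factorial_succ]
  have hf : ((Nat.factorial k : ℝ)) ≠ 0 := Nat.cast_ne_zero.2 (Nat.factorial_ne_zero k)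
  have hk : ((k:ℝ) + 1) ≠ 0 := by positivity
  push_cast
  field_simp
  ring

lemma bODE (x : ℝ) : x * bB2 x + bB1 x + x * bJ x = 0 := by
  have hs2 : Summable (fun j => x * bT2 j x) := (summable_bT2 x).mul_left x
  have hsum : x * bB2 x + bB1 x = ∑' j, bC j x := by
    rw [bB2, bB1, ← tsum_mul_left, ← Summable.tsum_add hs2 (summable_bT1 x)]
    exact tsum_congr (fun j => bC_eq j x)
  have hsC : Summable (fun j => bC j x) := by
    apply Summable.congr (hs2.add (summable_bT1 x)) (fun j => bC_eq j x)
  have h0 : bC 0 x = 0 := by simp [bC]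
  have hshift : ∑' j, bC j x = ∑' k, bC (k+1) x := by
    rw [Summable.tsum_eq_zero_add hsC, h0, zero_add]
  have hlast : ∑' k, bC (k+1) x = -(x * bJ x) := by
    rw [show (fun k => bC (k+1) x) = (fun k => -(x * bT k x)) from funext (fun k => bC_succ k x)]
    rw [tsum_neg, bJ, ← tsum_mul_left]
  rw [hsum, hshift, hlast]
  ring

noncomputable def bG (x : ℝ) : ℝ :=
  x * (bJ x)^2 + x * (bB1 x)^2 + bJ x * bB1 x + (bJ x)^2 / (2*x)

lemma hasDerivAt_bG (x : ℝ) (hx : 0 < x) : HasDerivAt bG (-(bJ x)^2/(2*x^2)) x := by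
  have hx0 : x ≠ 0 := ne_of_gt hx
  have hJ := hasDerivAt_bJ x
  have hB := hasDerivAt_bB1 x
  have t1 := (hasDerivAt_id x).mul (hJ.pow 2)
  have t2 := (hasDerivAt_id x).mul (hB.pow 2)
  have t3 := hJ.mul hB
  have t4 := (hJ.pow 2).div ((hasDerivAt_id x).const_mul 2) (by positivity)
  have h := ((t1.add t2).add t3).add t4
  have hB2 : bB2 x = -(bB1 x + x * bJ x)/x := by
    field_simp
    linarith [bODE x]
  convert h using 1
  all_goals try rfl
  rw [hB2]
  simp only [id, Pi.pow_apply]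
  field_simp
  ring

lemma bG_antitone : ∀ a b : ℝ, 1 ≤ a → a ≤ b → bG b ≤ bG a := by
  have h := antitoneOn_of_deriv_nonpos (convex_Ici (1:ℝ))
    (fun y hy => (hasDerivAt_bG y (lt_of_lt_of_le one_pos hy)).continuousAt.continuousWithinAt)
    (fun y hy => by
      rw [interior_Ici] at hy
      exact ((hasDerivAt_bG y (lt_trans one_pos hy)).differentiableAt.differentiableWithinAt))
    (fun y hy => by
      rw [interior_Ici] at hy
      rw [(hasDerivAt_bG y (lt_trans one_pos hy)).deriv]
      apply div_nonpos_of_nonpos_of_nonneg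
      · nlinarith [sq_nonneg (bJ y)]
      · positivity)
  intro a b ha hab
  exact h ha (le_trans ha hab) hab

lemma xJ_sq_le (x : ℝ) (hx : 1 ≤ x) : x * (bJ x)^2 ≤ bG 1 := by
  have h1 : x * (bJ x)^2 ≤ bG x := by
    rw [bG]
    have hx0 : 0 < x := lt_of_lt_of_le one_pos hx
    have key : 0 ≤ x * (bB1 x)^2 + bJ x * bB1 x + (bJ x)^2 / (2*x) := by
      have heq : x * (bB1 x)^2 + bJ x * bB1 x + (bJ x)^2 / (2*x)
          = ((2*x*bB1 x + bJ x)^2 + (bJ x)^2) / (4*x) := by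
        field_simp
        ring
      rw [heq]
      positivity
    linarith
  linarith [bG_antitone 1 x le_rfl hx]

noncomputable def bF (x : ℝ) (j : ℕ) : ℝ := x ^ (2*j) / (2 ^ (2 * j) * (Nat.factorial j) ^ 2)

lemma bT_eq_bF (j : ℕ) (x : ℝ) : bT j x = (-1)^j * bF x j := by
  rw [bT, bF, mul_div_assoc]

lemma bF_antitone (x : ℝ) (hx0 : 0 ≤ x) (hx2 : x ≤ 2) : Antitone (bF x) := by
  apply antitone_nat_of_succ_le
  intro j
  have hD : (0:ℝ) < 2 ^ (2 * j) * (Nat.factorial j) ^ 2 := by positivity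
  have hfact : (Nat.factorial (j+1) : ℝ) = ((j:ℝ)+1) * Nat.factorial j := by
    rw [Nat.factorial_succ]; push_cast; ring
  have heq : bF x (j+1) = bF x j * (x^2 / (4 * ((j:ℝ)+1)^2)) := by
    rw [bF, bF, hfact]
    have h1 : 2*(j+1) = 2*j + 2 := by ring
    rw [h1, pow_add, pow_add]
    have hf : ((Nat.factorial j : ℝ)) ≠ 0 := Nat.cast_ne_zero.2 (Nat.factorial_ne_zero j)
    have hj1 : ((j:ℝ)+1) ≠ 0 := by positivity
    field_simp
    ring_nf
    try tauto
  rw [heq]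
  have h2 : x^2 / (4 * ((j:ℝ)+1)^2) ≤ 1 := by
    rw [div_le_one (by positivity)]
    nlinarith [sq_nonneg ((j:ℝ))]
  have h3 : 0 ≤ bF x j := by rw [bF]; positivity
  nlinarith

lemma bJ_tendsto (x : ℝ) :
    Filter.Tendsto (fun n => ∑ i ∈ range n, (-1)^i * bF x i) Filter.atTop (nhds (bJ x)) := by
  have h := (summable_bT x).hasSum.tendsto_sum_nat
  apply h.congr
  intro n
  exact Finset.sum_congr rfl (fun i _ => bT_eq_bF i x)

lemma bJ_le_one (x : ℝ) (hx0 : 0 ≤ x) (hx2 : x ≤ 2) : bJ x ≤ 1 := by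
  have h := (bF_antitone x hx0 hx2).tendsto_le_alternating_series (bJ_tendsto x) 0
  simpa [bF, Finset.sum_range_succ] using h

lemma bJ_ge (x : ℝ) (hx0 : 0 ≤ x) (hx2 : x ≤ 2) : 1 - x^2/4 ≤ bJ x := by
  have h := (bF_antitone x hx0 hx2).alternating_series_le_tendsto (bJ_tendsto x) 1
  have he : ∑ i ∈ range (2*1), (-1)^i * bF x i = 1 - x^2/4 := by
    norm_num [Finset.sum_range_succ, bF, Nat.factorial]
    ring
  linarith [he ▸ h]

lemma bJ_le (x : ℝ) (hx0 : 0 ≤ x) (hx2 : x ≤ 2) : bJ x ≤ 1 - x^2/4 + x^4/64 := by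
  have h := (bF_antitone x hx0 hx2).tendsto_le_alternating_series (bJ_tendsto x) 1
  have he : ∑ i ∈ range (2*1+1), (-1)^i * bF x i = 1 - x^2/4 + x^4/64 := by
    norm_num [Finset.sum_range_succ, bF, Nat.factorial]
    ring
  linarith [he ▸ h]

lemma bJ_one_ge : (1763:ℝ)/2304 ≤ bJ 1 := by
  have h := (bF_antitone 1 (by norm_num) (by norm_num)).alternating_series_le_tendsto
    (bJ_tendsto 1) 2
  have he : ∑ i ∈ range (2*2), (-1)^i * bF 1 i = 1763/2304 := by
    norm_num [Finset.sum_range_succ, bF, Nat.factorial]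
  linarith [he ▸ h]

lemma bJ_one_le : bJ 1 ≤ (49:ℝ)/64 := by
  have h := bJ_le 1 (by norm_num) (by norm_num)
  norm_num at h
  linarith

noncomputable def bGG (k : ℕ) : ℝ := 1 / (2*((k:ℝ)+1) * 4^k * (Nat.factorial k)^2)

lemma bT1_succ_one (k : ℕ) : bT1 (k+1) 1 = (-1)^(k+1) * bGG k := by
  rw [bT1, bGG]
  have h1 : 2*(k+1) - 1 = 2*k+1 := by omega
  rw [h1, Nat.factorial_succ]
  have hf : ((Nat.factorial k : ℝ)) ≠ 0 := Nat.cast_ne_zero.2 (Nat.factorial_ne_zero k)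
  have hj1 : ((k:ℝ)+1) ≠ 0 := by positivity
  have h4 : ((2:ℝ))^(2*(k+1)) = 4 * 4^k := by
    rw [pow_mul]; norm_num [pow_succ]; ring
  rw [h4]
  push_cast
  field_simp
  ring

lemma bGG_antitone : Antitone bGG := by
  apply antitone_nat_of_succ_le
  intro k
  rw [bGG, bGG]
  have hf : (1:ℝ) ≤ (Nat.factorial k : ℝ) := Nat.one_le_cast.2 (Nat.one_le_iff_ne_zero.2 (Nat.factorial_ne_zero k))
  apply one_div_le_one_div_of_le (by positivity)
  have h1 : ((k:ℝ)+1) ≤ ((k+1:ℕ):ℝ)+1 := by push_cast; linarith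
  have h2 : ((4:ℝ))^k ≤ 4^(k+1) := by
    apply pow_le_pow_right₀ (by norm_num) (by omega)
  have h3 : ((Nat.factorial k : ℝ))^2 ≤ ((Nat.factorial (k+1) : ℝ))^2 := by
    have := Nat.factorial_le (Nat.le_succ k)
    have : (Nat.factorial k : ℝ) ≤ Nat.factorial (k+1) := Nat.cast_le.2 this
    nlinarith
  have hp1 : (0:ℝ) < (k:ℝ)+1 := by positivity
  have hp2 : (0:ℝ) < (4:ℝ)^k := by positivity
  have hp3 : (0:ℝ) < ((Nat.factorial k : ℝ))^2 := by positivity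
  calc 2*((k:ℝ)+1) * 4^k * (Nat.factorial k)^2
      ≤ 2*(((k+1:ℕ):ℝ)+1) * 4^(k+1) * (Nat.factorial (k+1))^2 := by
        apply mul_le_mul (mul_le_mul (by linarith) h2 (by positivity) (by push_cast; positivity)) h3 (by positivity) (by positivity)
  _ = 2*(((k+1:ℕ):ℝ)+1) * 4^(k+1) * (Nat.factorial (k+1))^2 := rfl

lemma bB1_one_eq : bB1 1 = -∑' k, (-1)^k * bGG k := by
  rw [bB1, Summable.tsum_eq_zero_add (summable_bT1 1)]
  have h0 : bT1 0 1 = 0 := by norm_num [bT1]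
  rw [h0, zero_add]
  rw [show (fun k => bT1 (k+1) 1) = (fun k => -((-1)^k * bGG k)) from
    funext (fun k => by rw [bT1_succ_one]; ring)]
  rw [tsum_neg]

lemma summable_alt_bGG : Summable (fun k => (-1)^k * bGG k) := by
  have h : Summable (fun k => bT1 (k+1) 1) := (summable_nat_add_iff 1).2 (summable_bT1 1)
  have := h.neg
  apply this.congr
  intro k
  rw [bT1_succ_one]
  ring

lemma bGG_tendsto :
    Filter.Tendsto (fun n => ∑ i ∈ range n, (-1)^i * bGG i) Filter.atTop
      (nhds (∑' k, (-1)^k * bGG k)) :=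
  summable_alt_bGG.hasSum.tendsto_sum_nat

lemma bB1_one_le : bB1 1 ≤ -(7:ℝ)/16 := by
  have h := bGG_antitone.alternating_series_le_tendsto bGG_tendsto 1
  have he : ∑ i ∈ range (2*1), (-1)^i * bGG i = 7/16 := by
    norm_num [Finset.sum_range_succ, bGG, Nat.factorial]
  rw [bB1_one_eq]
  linarith [he ▸ h]

lemma bB1_one_ge : -(169:ℝ)/384 ≤ bB1 1 := by
  have h := bGG_antitone.tendsto_le_alternating_series bGG_tendsto 1
  have he : ∑ i ∈ range (2*1+1), (-1)^i * bGG i = 169/384 := by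
    norm_num [Finset.sum_range_succ, bGG, Nat.factorial]
  rw [bB1_one_eq]
  linarith [he ▸ h]

lemma bG_one_le : bG 1 ≤ 3/4 := by
  have hJl := bJ_one_ge
  have hJu := bJ_one_le
  have hBl := bB1_one_ge
  have hBu := bB1_one_le
  rw [bG]
  norm_num
  nlinarith [sq_nonneg (bJ 1 - 1763/2304), sq_nonneg (bB1 1 + 169/384),
    mul_nonneg (sub_nonneg.2 hJl) (sub_nonneg.2 hBl)]

lemma bJ_decay (x : ℝ) (hx : 1 ≤ x) : x * (bJ x)^2 ≤ 3/4 :=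
  le_trans (xJ_sq_le x hx) bG_one_le

lemma bJ_mid (x : ℝ) (hx1 : 3/4 ≤ x) (hx2 : x ≤ 1) : x * (bJ x)^2 ≤ 3/4 := by
  have hx0 : (0:ℝ) ≤ x := by linarith
  have hl := bJ_ge x hx0 (by linarith)
  have hu := bJ_le x hx0 (by linarith)
  have ht1 : (9:ℝ)/16 ≤ x^2 := by nlinarith
  have ht2 : x^2 ≤ 1 := by nlinarith
  have hc : 1 - x^2/4 + x^4/64 ≤ 14161/16384 := by
    nlinarith [mul_nonneg (by linarith : (0:ℝ) ≤ x^2 - 9/16) (by linarith : (0:ℝ) ≤ 16 - x^2 - 9/16)]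
  have hJpos : 0 ≤ bJ x := by nlinarith
  have hu' : bJ x ≤ 14161/16384 := le_trans hu hc
  have hsq : (bJ x)^2 ≤ (14161/16384)^2 := by nlinarith
  have h34 : ((14161:ℝ)/16384)^2 ≤ 3/4 := by norm_num
  nlinarith [mul_nonneg (by linarith : (0:ℝ) ≤ 1 - x) (sq_nonneg (bJ x))]

lemma bJ_even (x : ℝ) : bJ (-x) = bJ x := by
  rw [bJ, bJ]
  apply tsum_congr
  intro j
  rw [bT, bT, pow_mul, pow_mul, neg_sq]
  rw [← pow_mul]


lemma bJ_abs_le_one (y : ℝ) (hy : 0 ≤ y) : |bJ y| ≤ 1 := by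
  rcases le_or_gt y 1 with h | h
  · have h1 := bJ_ge y hy (by linarith)
    have h2 := bJ_le_one y hy (by linarith)
    rw [abs_le]
    constructor <;> nlinarith [sq_nonneg y]
  · have := bJ_decay y h.le
    have hsq : (bJ y)^2 ≤ 1 := by nlinarith
    rw [abs_le]
    constructor <;> nlinarith [abs_nonneg (bJ y)]

lemma bJ_abs_le_sqrt (y : ℝ) (hy : 0 < y) : |bJ y| ≤ Real.sqrt (3 / (4 * y)) := by
  rcases le_or_gt y (3/4) with h | h
  · have h1 : (1:ℝ) ≤ 3 / (4 * y) := by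
      rw [le_div_iff₀ (by linarith)]
      linarith
    have h2 : (1:ℝ) ≤ Real.sqrt (3 / (4 * y)) := by
      rw [show (1:ℝ) = Real.sqrt 1 from (Real.sqrt_one).symm]
      exact Real.sqrt_le_sqrt h1
    linarith [bJ_abs_le_one y hy.le]
  · have hkey : y * (bJ y)^2 ≤ 3/4 := by
      rcases le_or_gt y 1 with h1 | h1
      · exact bJ_mid y h.le h1
      · exact bJ_decay y h1.le
    have hsq : (bJ y)^2 ≤ 3 / (4 * y) := by
      rw [le_div_iff₀ (by linarith)]
      linarith
    calc |bJ y| = Real.sqrt ((bJ y)^2) := (Real.sqrt_sq_eq_abs _).symm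
    _ ≤ Real.sqrt (3 / (4 * y)) := Real.sqrt_le_sqrt hsq


lemma besselJ0_eq_bJ_abs (x : ℝ) : besselJ0 x = bJ |x| := by
  have h0 : besselJ0 x = bJ x := rfl
  rcases abs_cases x with ⟨h1, _⟩ | ⟨h1, _⟩
  · rw [h1, h0]
  · rw [h1, bJ_even, h0]

/-- `|J₀(x)| ≤ min {1, √(3/(4|x|))}`. -/
theorem abs_besselJ0_le (x : ℝ) :
    |besselJ0 x| ≤ 1 ∧ (x ≠ 0 → |besselJ0 x| ≤ Real.sqrt (3 / (4 * |x|))) := by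
  rw [besselJ0_eq_bJ_abs]
  exact ⟨bJ_abs_le_one |x| (abs_nonneg x), fun hx => bJ_abs_le_sqrt |x| (abs_pos.2 hx)⟩
end

section
/- Let (X_k)_{k≥1} be independent random variables with X_k = cos(2πΘ_k), Θ_k uniform on [0,1], let μ ∈ ℝ, and let (r_k) be nonnegative reals with Σ r_k² = σ² < ∞. Let X = μ + Σ r_k X_k. Then for every V ≥ μ, P(X ≥ V) ≤ exp(-(V-μ)²/(2σ²)). -/
open MeasureTheory ProbabilityTheory Real
open scoped ENNReal

private lemma exp_chord (a x : ℝ) (hx : |x| ≤ 1) :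
    Real.exp (a * x) ≤ Real.cosh a + Real.sinh a * x := by
  obtain ⟨hx1, hx2⟩ := abs_le.1 hx
  have h := convexOn_exp.2 (Set.mem_univ (-a)) (Set.mem_univ a)
    (show (0:ℝ) ≤ (1 - x) / 2 by linarith) (show (0:ℝ) ≤ (1 + x) / 2 by linarith)
    (by ring : (1 - x) / 2 + (1 + x) / 2 = 1)
  simp only [smul_eq_mul] at h
  have hax : (1 - x) / 2 * (-a) + (1 + x) / 2 * a = a * x := by ring
  rw [hax] at h
  rw [Real.cosh_eq, Real.sinh_eq]
  calc Real.exp (a * x) ≤ (1 - x) / 2 * Real.exp (-a) + (1 + x) / 2 * Real.exp a := h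
    _ = (Real.exp a + Real.exp (-a)) / 2 + (Real.exp a - Real.exp (-a)) / 2 * x := by ring

private lemma integral_cos_two_pi :
    ∫ θ in Set.Icc (0:ℝ) 1, Real.cos (2 * Real.pi * θ) = 0 := by
  rw [MeasureTheory.integral_Icc_eq_integral_Ioc,
    ← intervalIntegral.integral_of_le (by norm_num : (0:ℝ) ≤ 1)]
  have h2π : (2 * Real.pi) ≠ 0 := by positivity
  rw [intervalIntegral.integral_comp_mul_left (fun x => Real.cos x) h2π]
  simp [Real.sin_two_pi]

private lemma integral_exp_cos_le (a : ℝ) :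
    ∫ θ in Set.Icc (0:ℝ) 1, Real.exp (a * Real.cos (2 * Real.pi * θ)) ≤
      Real.exp (a ^ 2 / 2) := by
  have hcont1 : Continuous fun θ : ℝ => Real.exp (a * Real.cos (2 * Real.pi * θ)) := by
    continuity
  have hcont2 : Continuous fun θ : ℝ =>
      Real.cosh a + Real.sinh a * Real.cos (2 * Real.pi * θ) := by continuity
  have hint1 : IntegrableOn (fun θ : ℝ => Real.exp (a * Real.cos (2 * Real.pi * θ)))
      (Set.Icc 0 1) volume := hcont1.integrableOn_Icc
  have hint2 : IntegrableOn (fun θ : ℝ =>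
      Real.cosh a + Real.sinh a * Real.cos (2 * Real.pi * θ)) (Set.Icc 0 1) volume :=
    hcont2.integrableOn_Icc
  have hintc : IntegrableOn (fun θ : ℝ => Real.cos (2 * Real.pi * θ))
      (Set.Icc 0 1) volume := by
    have : Continuous fun θ : ℝ => Real.cos (2 * Real.pi * θ) := by continuity
    exact this.integrableOn_Icc
  have h1 : ∫ θ in Set.Icc (0:ℝ) 1, Real.exp (a * Real.cos (2 * Real.pi * θ)) ≤
      ∫ θ in Set.Icc (0:ℝ) 1, (Real.cosh a + Real.sinh a * Real.cos (2 * Real.pi * θ)) :=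
    integral_mono hint1 hint2 fun θ => exp_chord a _ (Real.abs_cos_le_one _)
  have h2 : ∫ θ in Set.Icc (0:ℝ) 1,
      (Real.cosh a + Real.sinh a * Real.cos (2 * Real.pi * θ)) = Real.cosh a := by
    rw [integral_add (show IntegrableOn (fun _ : ℝ => Real.cosh a) (Set.Icc 0 1) volume from integrableOn_const (by simp [Real.volume_Icc])) (hintc.const_mul _),
      integral_const_mul, integral_cos_two_pi, setIntegral_const]
    simp [Real.volume_Icc]
  calc ∫ θ in Set.Icc (0:ℝ) 1, Real.exp (a * Real.cos (2 * Real.pi * θ))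
      ≤ Real.cosh a := h2 ▸ h1
    _ ≤ Real.exp (a ^ 2 / 2) := Real.cosh_le_exp_half_sq a

/-- Gaussian-type upper tail bound for a random sum `X = μ + ∑ r_k X_k` of independent
sine-distributed variables `X_k = cos(2πΘ_k)`, `Θ_k` uniform on `[0,1]`:
for `V ≥ μ`, `P(X ≥ V) ≤ exp(-(V-μ)²/(2σ²))` where `σ² = ∑ r_k²`. -/
theorem tail_bound_of_random_bessel_sum
    {Ω : Type*} [MeasureSpace Ω] [IsProbabilityMeasure (ℙ : Measure Ω)]
    (X : ℕ → Ω → ℝ) (hmeas : ∀ k, Measurable (X k))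
    (hindep : iIndepFun X ℙ)
    (hdist : ∀ k, Measure.map (X k) ℙ =
      Measure.map (fun θ : ℝ => Real.cos (2 * Real.pi * θ))
        ((volume : Measure ℝ).restrict (Set.Icc 0 1)))
    (μ : ℝ) (r : ℕ → ℝ) (hr : ∀ k, 0 ≤ r k) (σ2 : ℝ)
    (hσ2 : HasSum (fun k => r k ^ 2) σ2) :
    ∀ V : ℝ, μ ≤ V →
      (ℙ {ω | V ≤ μ + ∑' k, r k * X k ω}).toReal ≤
        Real.exp (-(V - μ) ^ 2 / (2 * σ2)) := by
  intro V hV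
  have hprob1 : ∀ (E : Set Ω), (ℙ E).toReal ≤ 1 := fun E => by
    calc (ℙ E).toReal ≤ (1 : ℝ≥0∞).toReal :=
          ENNReal.toReal_mono ENNReal.one_ne_top prob_le_one
      _ = 1 := by simp
  have hσnn : 0 ≤ σ2 := hσ2.nonneg fun k => sq_nonneg _
  rcases eq_or_lt_of_le hV with hVeq | hVlt
  · subst hVeq; simpa using hprob1 _
  rcases eq_or_lt_of_le hσnn with hσ0 | hσpos
  · rw [← hσ0]; simpa using hprob1 _
  -- main case
  set t : ℝ := V - μ with htdef
  have ht : 0 < t := sub_pos.2 hVlt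
  set s : ℝ := t / σ2 with hsdef
  have hs : 0 < s := div_pos ht hσpos
  have hmeascos : Measurable fun θ : ℝ => Real.cos (2 * Real.pi * θ) := by fun_prop
  have hcontexp : ∀ a : ℝ, AEStronglyMeasurable (fun x : ℝ => Real.exp (a * x))
      (Measure.map (X 0) ℙ) := fun a => (Continuous.aestronglyMeasurable (by fun_prop))
  -- a.s. bound on X k
  have haeb : ∀ k, ∀ᵐ ω ∂(ℙ : Measure Ω), |X k ω| ≤ 1 := by
    intro k
    rw [ae_iff]
    have hset : {ω | ¬|X k ω| ≤ 1} = X k ⁻¹' (Set.Icc (-1) 1)ᶜ := by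
      ext ω; simp [abs_le]
    rw [hset, ← Measure.map_apply (hmeas k) (measurableSet_Icc.compl), hdist k,
      Measure.map_apply hmeascos measurableSet_Icc.compl]
    have : (fun θ : ℝ => Real.cos (2 * Real.pi * θ)) ⁻¹' (Set.Icc (-1) 1)ᶜ = ∅ := by
      ext θ
      simp [Real.neg_one_le_cos, Real.cos_le_one]
    rw [this]; simp
  -- integral bound for each X k
  have hXint : ∀ (a : ℝ) (k : ℕ),
      ∫ ω, Real.exp (a * X k ω) ∂(ℙ : Measure Ω) ≤ Real.exp (a ^ 2 / 2) := by
    intro a k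
    have h1 : ∫ ω, Real.exp (a * X k ω) ∂(ℙ : Measure Ω) =
        ∫ x, Real.exp (a * x) ∂(Measure.map (X k) ℙ) := by
      rw [integral_map (hmeas k).aemeasurable
        (f := fun x : ℝ => Real.exp (a * x)) (Continuous.aestronglyMeasurable (by fun_prop))]
    rw [h1, hdist k, integral_map (hmeascos).aemeasurable
      (f := fun x : ℝ => Real.exp (a * x))
      ((Real.continuous_exp.comp (continuous_mul_left a)).aestronglyMeasurable)]
    exact integral_exp_cos_le a
  -- the scaled variables
  set Y : ℕ → Ω → ℝ := fun k ω => r k * X k ω with hYdef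
  have hYmeas : ∀ k, Measurable (Y k) := fun k => (hmeas k).const_mul (r k)
  have hindepY : iIndepFun Y ℙ := by
    have := hindep.comp (fun k (x : ℝ) => r k * x) fun k => measurable_const.mul measurable_id
    exact this
  -- integrability of exp (s * Y k)
  have hYint : ∀ k, Integrable (fun ω => Real.exp (s * Y k ω)) (ℙ : Measure Ω) := by
    intro k
    refine Integrable.mono' (integrable_const (Real.exp (s * r k)))
      (Real.measurable_exp.comp ((hYmeas k).const_mul s)).aestronglyMeasurable ?_
    filter_upwards [haeb k] with ω hω
    rw [Real.norm_eq_abs, Real.abs_exp, Real.exp_le_exp]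
    have h1 : X k ω ≤ 1 := (abs_le.1 hω).2
    have h2 : Y k ω = r k * X k ω := rfl
    rw [h2]
    nlinarith [mul_nonneg (mul_nonneg hs.le (hr k)) (sub_nonneg.2 h1)]
  -- mgf bound for each Y k
  have hmgf : ∀ k, mgf (Y k) ℙ s ≤ Real.exp (s ^ 2 * r k ^ 2 / 2) := by
    intro k
    have h1 : mgf (Y k) ℙ s = ∫ ω, Real.exp ((s * r k) * X k ω) ∂(ℙ : Measure Ω) := by
      unfold mgf
      congr 1 with ω
      rw [hYdef]; ring_nf
    rw [h1]
    calc ∫ ω, Real.exp ((s * r k) * X k ω) ∂(ℙ : Measure Ω)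
        ≤ Real.exp ((s * r k) ^ 2 / 2) := hXint _ k
      _ = Real.exp (s ^ 2 * r k ^ 2 / 2) := by rw [mul_pow]
  -- mgf bound for finite sums
  have hsum_fun : ∀ n : ℕ, (fun ω => ∑ k ∈ Finset.range n, r k * X k ω) =
      (∑ k ∈ Finset.range n, Y k) := by
    intro n; ext ω; simp [hYdef]
  have hsum_mgf : ∀ n : ℕ,
      ∫ ω, Real.exp (s * ∑ k ∈ Finset.range n, r k * X k ω) ∂(ℙ : Measure Ω) ≤
        Real.exp (s ^ 2 * σ2 / 2) := by
    intro n
    have h1 : ∫ ω, Real.exp (s * ∑ k ∈ Finset.range n, r k * X k ω) ∂(ℙ : Measure Ω) =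
        mgf (∑ k ∈ Finset.range n, Y k) ℙ s := by
      unfold mgf; rw [← hsum_fun n]
    rw [h1, hindepY.mgf_sum hYmeas]
    calc ∏ k ∈ Finset.range n, mgf (Y k) ℙ s
        ≤ ∏ k ∈ Finset.range n, Real.exp (s ^ 2 * r k ^ 2 / 2) :=
          Finset.prod_le_prod (fun k _ => mgf_nonneg) (fun k _ => hmgf k)
      _ = Real.exp (∑ k ∈ Finset.range n, s ^ 2 * r k ^ 2 / 2) := by
          rw [Real.exp_sum]
      _ ≤ Real.exp (s ^ 2 * σ2 / 2) := by
          rw [Real.exp_le_exp]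
          have : ∑ k ∈ Finset.range n, s ^ 2 * r k ^ 2 / 2 =
              s ^ 2 / 2 * ∑ k ∈ Finset.range n, r k ^ 2 := by
            rw [Finset.mul_sum]; congr 1 with k; ring
          rw [this]
          have hle : ∑ k ∈ Finset.range n, r k ^ 2 ≤ σ2 :=
            sum_le_hasSum _ (fun k _ => sq_nonneg _) hσ2
          nlinarith [sq_nonneg s]
  -- the ℝ≥0∞-valued functions
  set f : ℕ → Ω → ℝ≥0∞ := fun n ω =>
    ENNReal.ofReal (Real.exp (s * ∑ k ∈ Finset.range n, r k * X k ω)) with hfdef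
  have hfmeas : ∀ n, Measurable (f n) := by
    intro n
    have hm : Measurable fun ω => ∑ k ∈ Finset.range n, r k * X k ω :=
      Finset.measurable_sum _ fun k _ => (hmeas k).const_mul (r k)
    exact (Real.measurable_exp.comp (hm.const_mul s)).ennreal_ofReal
  have hflint : ∀ n, ∫⁻ ω, f n ω ∂(ℙ : Measure Ω) ≤
      ENNReal.ofReal (Real.exp (s ^ 2 * σ2 / 2)) := by
    intro n
    have hintn : Integrable
        (fun ω => Real.exp (s * ∑ k ∈ Finset.range n, r k * X k ω)) (ℙ : Measure Ω) := by
      have := hindepY.integrable_exp_mul_sum (t := s) hYmeas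
        (s := Finset.range n) (fun k _ => hYint k)
      have heq : (fun ω => Real.exp (s * (∑ k ∈ Finset.range n, Y k) ω)) =
          fun ω => Real.exp (s * ∑ k ∈ Finset.range n, r k * X k ω) := by
        rw [← hsum_fun n]
      rwa [heq] at this
    rw [hfdef]
    rw [← ofReal_integral_eq_lintegral_ofReal hintn
      (Filter.Eventually.of_forall fun ω => (Real.exp_pos _).le)]
    exact ENNReal.ofReal_le_ofReal (hsum_mgf n)
  set L : Ω → ℝ≥0∞ := fun ω => Filter.liminf (fun n => f n ω) Filter.atTop with hLdef
  have hLmeas : Measurable L := Measurable.liminf hfmeas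
  have hLlint : ∫⁻ ω, L ω ∂(ℙ : Measure Ω) ≤ ENNReal.ofReal (Real.exp (s ^ 2 * σ2 / 2)) := by
    refine (lintegral_liminf_le hfmeas).trans ?_
    calc Filter.liminf (fun n => ∫⁻ ω, f n ω ∂(ℙ : Measure Ω)) Filter.atTop
        ≤ Filter.liminf (fun _ : ℕ => ENNReal.ofReal (Real.exp (s ^ 2 * σ2 / 2)))
            Filter.atTop := Filter.liminf_le_liminf (Filter.Eventually.of_forall hflint)
      _ = ENNReal.ofReal (Real.exp (s ^ 2 * σ2 / 2)) := Filter.liminf_const _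
  -- inclusion of events
  have hsub : {ω | V ≤ μ + ∑' k, r k * X k ω} ⊆
      {ω | ENNReal.ofReal (Real.exp (s * t)) ≤ L ω} := by
    intro ω hω
    rw [Set.mem_setOf_eq] at hω
    have hωt : t ≤ ∑' k, r k * X k ω := by rw [htdef]; linarith
    have hsumm : Summable fun k => r k * X k ω := by
      by_contra hns
      rw [tsum_eq_zero_of_not_summable hns] at hωt
      linarith
    have htend : Filter.Tendsto (fun n => ∑ k ∈ Finset.range n, r k * X k ω)
        Filter.atTop (nhds (∑' k, r k * X k ω)) := hsumm.hasSum.tendsto_sum_nat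
    have htend2 : Filter.Tendsto (fun n => f n ω) Filter.atTop
        (nhds (ENNReal.ofReal (Real.exp (s * ∑' k, r k * X k ω)))) := by
      apply (ENNReal.continuous_ofReal.tendsto _).comp
      exact (Real.continuous_exp.tendsto _).comp (htend.const_mul s)
    have hL : L ω = ENNReal.ofReal (Real.exp (s * ∑' k, r k * X k ω)) := htend2.liminf_eq
    rw [Set.mem_setOf_eq, hL]
    exact ENNReal.ofReal_le_ofReal (Real.exp_le_exp.2 (mul_le_mul_of_nonneg_left hωt hs.le))
  -- Markov inequality
  have hmain : ℙ {ω | V ≤ μ + ∑' k, r k * X k ω} ≤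
      ENNReal.ofReal (Real.exp (s ^ 2 * σ2 / 2 - s * t)) := by
    calc ℙ {ω | V ≤ μ + ∑' k, r k * X k ω}
        ≤ ℙ {ω | ENNReal.ofReal (Real.exp (s * t)) ≤ L ω} := measure_mono hsub
      _ ≤ (∫⁻ ω, L ω ∂(ℙ : Measure Ω)) / ENNReal.ofReal (Real.exp (s * t)) :=
          meas_ge_le_lintegral_div hLmeas.aemeasurable
            (by simp [Real.exp_pos]) ENNReal.ofReal_ne_top
      _ ≤ ENNReal.ofReal (Real.exp (s ^ 2 * σ2 / 2)) / ENNReal.ofReal (Real.exp (s * t)) := by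
          gcongr
      _ = ENNReal.ofReal (Real.exp (s ^ 2 * σ2 / 2) / Real.exp (s * t)) :=
          (ENNReal.ofReal_div_of_pos (Real.exp_pos _)).symm
      _ = ENNReal.ofReal (Real.exp (s ^ 2 * σ2 / 2 - s * t)) := by rw [Real.exp_sub]
  have hfinal : s ^ 2 * σ2 / 2 - s * t = -(V - μ) ^ 2 / (2 * σ2) := by
    rw [hsdef, htdef]
    field_simp
    ring
  calc (ℙ {ω | V ≤ μ + ∑' k, r k * X k ω}).toReal
      ≤ (ENNReal.ofReal (Real.exp (s ^ 2 * σ2 / 2 - s * t))).toReal :=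
        ENNReal.toReal_mono ENNReal.ofReal_ne_top hmain
    _ = Real.exp (s ^ 2 * σ2 / 2 - s * t) := ENNReal.toReal_ofReal (Real.exp_pos _).le
    _ = Real.exp (-(V - μ) ^ 2 / (2 * σ2)) := by rw [hfinal]
end
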